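/- arXiv:2509.04234 — 3 statements merged into one kernel-verified Lean document; each statement's English description precedes it below -/
import Mathlib

section
/- Let l ≥ 2, let m, n ≥ 2l − 3, set N = m + n − l, and for 1 ≤ d ≤ l−1 let R(l,d) be the number of Brauer representation triples γ for the pair (m, n−d) with N < ht(γ) ≤ N + d. Then R(l,d) = Z_univ(l−d) − Z_univ(l−2d) for 1 ≤ d ≤ ⌊l/2⌋, and R(l,d) = Z_univ(l−d) for ⌈l/2⌉ ≤ d ≤ l−1. -/
/-- A Brauer representation triple for the pair `(m, n)`: a natural number
`k ≤ min m n`, a partition `γ₊` of `m - k` and a partition `γ₋` of `n - k`. -/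
structure BRT (m n : ℕ) where
  k : ℕ
  k_le : k ≤ min m n
  gp : Nat.Partition (m - k)
  gm : Nat.Partition (n - k)

namespace BRT

/-- The height of a Brauer representation triple: the total number of parts of the
two partitions (the sum of the first-column lengths of the Young diagrams). -/
def ht {m n : ℕ} (γ : BRT m n) : ℕ :=
  Multiset.card γ.gp.parts + Multiset.card γ.gm.parts

end BRT

/-- `AddBox lam mu` : the multiset of parts `mu` is obtained from the multiset of parts
`lam` by adding one box to the Young diagram (either as a new part equal to `1`, or by
increasing one existing part by `1`). -/
def AddBox (lam mu : Multiset ℕ) : Prop :=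
  mu = 1 ::ₘ lam ∨ ∃ a ∈ lam, mu = (a + 1) ::ₘ lam.erase a

/-- `γ'` (a triple at depth `d+1`) is a parent of `γ` (a triple at depth `d`):
either (a) `k' = k`, `γ₊' = γ₊` and `γ₋` is obtained from `γ₋'` by adding one box, or
(b) `k' = k - 1`, `γ₋' = γ₋` and `γ₊'` is obtained from `γ₊` by adding one box. -/
def IsParent {m n₁ n₂ : ℕ} (γ : BRT m n₁) (γ' : BRT m n₂) : Prop :=
  (γ'.k = γ.k ∧ γ'.gp.parts = γ.gp.parts ∧ AddBox γ'.gm.parts γ.gm.parts)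
  ∨ (γ'.k = γ.k - 1 ∧ γ'.gm.parts = γ.gm.parts ∧ AddBox γ.gp.parts γ'.gp.parts)

/-- `IsAncestor m n d d' γ γ'` : the triple `γ'` at depth `d'` for the pair `(m,n)` is an
ancestor of the triple `γ` at depth `d`, i.e. `γ'` is reachable from `γ` by iterating
the parent relation `d' - d` times (one step for each unit increase of depth). -/
inductive IsAncestor (m n : ℕ) : ∀ (d d' : ℕ), BRT m (n - d) → BRT m (n - d') → Prop
  | step {d : ℕ} (γ : BRT m (n - d)) (γ' : BRT m (n - (d + 1))) :
      IsParent γ γ' → IsAncestor m n d (d + 1) γ γ'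
  | tail {d d' : ℕ} {γ : BRT m (n - d)} {γ' : BRT m (n - d')} (γ'' : BRT m (n - (d' + 1))) :
      IsAncestor m n d d' γ γ' → IsParent γ' γ'' → IsAncestor m n d (d' + 1) γ γ''

/-- `Zuniv s` : the number of quadruples `(Δ, k, λ₁, λ₂)` with `Δ ≥ 1`, `k ≥ 0` natural
numbers and `λ₁, λ₂` partitions (of arbitrary natural numbers) such that
`Δ + 2k + |λ₁| + |λ₂| = s`. -/
noncomputable def Zuniv (s : ℕ) : ℕ :=
  Nat.card {q : (ℕ × ℕ) × (Σ a : ℕ, Nat.Partition a) × (Σ a : ℕ, Nat.Partition a) //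
    1 ≤ q.1.1 ∧ q.1.1 + 2 * q.1.2 + q.2.1.1 + q.2.2.1 = s}

/-- `p a` : the number of partitions of `a` (with `p 0 = 1`). -/
def p (a : ℕ) : ℕ := Fintype.card (Nat.Partition a)



/-- Add a column: increase every part by 1 and add `j` new parts equal to 1. -/
def addCol (s : Multiset ℕ) (j : ℕ) : Multiset ℕ := s.map (· + 1) + Multiset.replicate j 1

/-- Remove the first column: decrease every part by 1 and drop the zeros. -/
def remCol (s : Multiset ℕ) : Multiset ℕ := (s.map (· - 1)).filter (0 < ·)

lemma card_le_sum' (s : Multiset ℕ) (h : ∀ x ∈ s, 0 < x) : Multiset.card s ≤ s.sum := by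
  induction s using Multiset.induction_on with
  | empty => simp
  | cons a s ih =>
    simp only [Multiset.card_cons, Multiset.sum_cons]
    have h1 := h a (Multiset.mem_cons_self a s)
    have h2 := ih (fun x hx => h x (Multiset.mem_cons_of_mem hx))
    omega

lemma addCol_pos (s : Multiset ℕ) (j : ℕ) : ∀ x ∈ addCol s j, 0 < x := by
  intro x hx
  rcases Multiset.mem_add.mp hx with h | h
  · obtain ⟨y, _, rfl⟩ := Multiset.mem_map.mp h; omega
  · rw [Multiset.eq_of_mem_replicate h]; norm_num

lemma remCol_pos (s : Multiset ℕ) : ∀ x ∈ remCol s, 0 < x := by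
  intro x hx
  exact (Multiset.mem_filter.mp hx).2

lemma card_addCol (s : Multiset ℕ) (j : ℕ) : Multiset.card (addCol s j) = Multiset.card s + j := by
  simp [addCol]

lemma sum_addCol (s : Multiset ℕ) (j : ℕ) : (addCol s j).sum = s.sum + Multiset.card s + j := by
  induction s using Multiset.induction_on with
  | empty => simp [addCol]
  | cons a s ih =>
    simp only [addCol, Multiset.map_cons, Multiset.cons_add, Multiset.sum_cons,
      Multiset.card_cons] at *
    omega

lemma remCol_cons_one (s : Multiset ℕ) : remCol (1 ::ₘ s) = remCol s := by
  simp only [remCol, Multiset.map_cons]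
  rw [Multiset.filter_cons_of_neg]
  simp

lemma remCol_cons_ge (a : ℕ) (s : Multiset ℕ) (ha : 2 ≤ a) :
    remCol (a ::ₘ s) = (a - 1) ::ₘ remCol s := by
  simp only [remCol, Multiset.map_cons]
  rw [Multiset.filter_cons_of_pos]
  omega

lemma card_remCol_le (s : Multiset ℕ) : Multiset.card (remCol s) ≤ Multiset.card s := by
  calc Multiset.card (remCol s) ≤ Multiset.card (s.map (· - 1)) := Multiset.card_le_card (Multiset.filter_le _ _)
  _ = Multiset.card s := Multiset.card_map _ _

lemma sum_remCol (s : Multiset ℕ) (h : ∀ x ∈ s, 0 < x) :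
    (remCol s).sum = s.sum - Multiset.card s := by
  induction s using Multiset.induction_on with
  | empty => simp [remCol]
  | cons a s ih =>
    have h1 := h a (Multiset.mem_cons_self a s)
    have h2 := ih (fun x hx => h x (Multiset.mem_cons_of_mem hx))
    have h3 := card_le_sum' s (fun x hx => h x (Multiset.mem_cons_of_mem hx))
    rcases Nat.lt_or_ge a 2 with ha | ha
    · have : a = 1 := by omega
      subst this
      rw [remCol_cons_one]
      simp only [Multiset.sum_cons, Multiset.card_cons]
      omega
    · rw [remCol_cons_ge a s ha]
      simp only [Multiset.sum_cons, Multiset.card_cons]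
      omega

lemma remCol_addCol (s : Multiset ℕ) (j : ℕ) (h : ∀ x ∈ s, 0 < x) :
    remCol (addCol s j) = s := by
  simp only [remCol, addCol, Multiset.map_add, Multiset.map_map, Multiset.map_replicate,
    Multiset.filter_add]
  have h1 : Multiset.map ((fun x => x - 1) ∘ fun x => x + 1) s = s := by
    rw [Multiset.map_congr rfl (fun x _ => by simp : ∀ x ∈ s, ((fun x => x - 1) ∘ fun x => x + 1) x = id x), Multiset.map_id]
  rw [h1]
  have h2 : Multiset.filter (0 < ·) s = s := Multiset.filter_eq_self.mpr h
  have h3 : Multiset.filter (0 < ·) (Multiset.replicate j (1 - 1)) = 0 := by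
    rw [Multiset.filter_eq_nil.mpr]
    intro x hx
    rw [Multiset.eq_of_mem_replicate hx]
    norm_num
  rw [h2, h3, add_zero]

lemma addCol_remCol (s : Multiset ℕ) (h : ∀ x ∈ s, 0 < x) :
    addCol (remCol s) (Multiset.card s - Multiset.card (remCol s)) = s := by
  induction s using Multiset.induction_on with
  | empty => simp [remCol, addCol]
  | cons a s ih =>
    have h1 := h a (Multiset.mem_cons_self a s)
    have h2 := ih (fun x hx => h x (Multiset.mem_cons_of_mem hx))
    have h3 := card_remCol_le s
    rcases Nat.lt_or_ge a 2 with ha | ha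
    · have : a = 1 := by
        omega
      subst this
      rw [remCol_cons_one]
      have hj : Multiset.card (1 ::ₘ s) - Multiset.card (remCol s)
          = (Multiset.card s - Multiset.card (remCol s)) + 1 := by
        simp only [Multiset.card_cons]; omega
      rw [hj]
      simp only [addCol, Multiset.replicate_succ] at *
      rw [show Multiset.map (· + 1) (remCol s) + (1 ::ₘ Multiset.replicate (Multiset.card s - Multiset.card (remCol s)) 1) = 1 ::ₘ (Multiset.map (· + 1) (remCol s) + Multiset.replicate (Multiset.card s - Multiset.card (remCol s)) 1) from by
        rw [Multiset.add_cons]]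
      rw [h2]
    · rw [remCol_cons_ge a s ha]
      have hj : Multiset.card (a ::ₘ s) - Multiset.card ((a-1) ::ₘ remCol s)
          = Multiset.card s - Multiset.card (remCol s) := by
        simp only [Multiset.card_cons]; omega
      rw [hj]
      simp only [addCol, Multiset.map_cons] at *
      rw [Multiset.cons_add, h2]
      congr 1
      omega

abbrev Tq := (ℕ × ℕ) × (Σ a : ℕ, Nat.Partition a) × (Σ a : ℕ, Nat.Partition a)

lemma sigma_part_eq {x y : ℕ} (px : Nat.Partition x) (py : Nat.Partition y)
    (h1 : x = y) (h2 : px.parts = py.parts) :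
    (⟨x, px⟩ : Σ a : ℕ, Nat.Partition a) = ⟨y, py⟩ := by
  subst h1
  rw [Nat.Partition.ext h2]

lemma brt_ext {m n : ℕ} {γ γ' : BRT m n} (hk : γ.k = γ'.k)
    (hp : γ.gp.parts = γ'.gp.parts) (hm : γ.gm.parts = γ'.gm.parts) : γ = γ' := by
  obtain ⟨k, kle, gp, gm⟩ := γ
  obtain ⟨k', kle', gp', gm'⟩ := γ'
  dsimp at hk
  subst hk
  dsimp at hp hm
  cases Nat.Partition.ext hp
  cases Nat.Partition.ext hm
  rfl

lemma finite_aux (s : ℕ) (P : Tq → Prop)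
    (hP : ∀ q, P q → q.1.1 + 2 * q.1.2 + q.2.1.1 + q.2.2.1 = s) :
    Finite {q : Tq // P q} := by
  let F : {q : Tq // P q} →
      (Fin (s+1) × Fin (s+1)) × (Σ a : Fin (s+1), Nat.Partition a.1) ×
        (Σ a : Fin (s+1), Nat.Partition a.1) :=
    fun q => ((⟨q.1.1.1, by have := hP q.1 q.2; omega⟩, ⟨q.1.1.2, by have := hP q.1 q.2; omega⟩),
      ⟨⟨q.1.2.1.1, by have := hP q.1 q.2; omega⟩, q.1.2.1.2⟩,
      ⟨⟨q.1.2.2.1, by have := hP q.1 q.2; omega⟩, q.1.2.2.2⟩)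
  have hinj : Function.Injective F := by
    rintro ⟨⟨⟨Δ₁, k₁⟩, ⟨a₁, p₁⟩, ⟨b₁, q₁⟩⟩, h₁⟩ ⟨⟨⟨Δ₂, k₂⟩, ⟨a₂, p₂⟩, ⟨b₂, q₂⟩⟩, h₂⟩ h
    have e1 : Δ₁ = Δ₂ := congrArg (fun z => z.1.1.1) h
    have e2 : k₁ = k₂ := congrArg (fun z => z.1.2.1) h
    have hS1 := congrArg (fun z => z.2.1) h
    have hS2 := congrArg (fun z => z.2.2) h
    have e3 : a₁ = a₂ := congrArg (fun z => z.1.1) hS1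
    have e4 : b₁ = b₂ := congrArg (fun z => z.1.1) hS2
    subst e1; subst e2; subst e3; subst e4
    have e5 : p₁ = p₂ := eq_of_heq (Sigma.ext_iff.mp hS1).2
    have e6 : q₁ = q₂ := eq_of_heq (Sigma.ext_iff.mp hS2).2
    cases e5; cases e6; rfl
  exact Finite.of_injective F hinj

instance brt_finite (m n : ℕ) : Finite (BRT m n) := by
  let F : BRT m n → Σ k : Fin (min m n + 1), Nat.Partition (m - k.1) × Nat.Partition (n - k.1) :=
    fun γ => ⟨⟨γ.k, by have := γ.k_le; omega⟩, γ.gp, γ.gm⟩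
  have hinj : Function.Injective F := by
    rintro ⟨k, hk, gp, gm⟩ ⟨k', hk', gp', gm'⟩ h
    have e1 : k = k' := congrArg (fun z => z.1.1) h
    subst e1
    have e2 := eq_of_heq (Sigma.ext_iff.mp h).2
    exact brt_ext rfl (congrArg (fun x => x.1.parts) e2) (congrArg (fun x => x.2.parts) e2)
  exact Finite.of_injective F hinj

lemma Zuniv_zero : Zuniv 0 = 0 := by
  have : IsEmpty {q : Tq // 1 ≤ q.1.1 ∧ q.1.1 + 2 * q.1.2 + q.2.1.1 + q.2.2.1 = 0} :=
    ⟨fun q => by have := q.2; omega⟩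
  exact Nat.card_of_isEmpty

section Main

variable (l m n d : ℕ)

/-- Forward map: from a triple in the height window to a quadruple. -/
def fAB (hl : 2 ≤ l) (hm : 2 * l - 3 ≤ m) (hn : 2 * l - 3 ≤ n) (hd1 : 1 ≤ d) (hd2 : d ≤ l - 1)
    (γσ : {γ : BRT m (n - d) // m + n - l < γ.ht ∧ γ.ht ≤ (m + n - l) + d}) :
    {q : Tq // 1 ≤ q.1.1 ∧ q.1.1 ≤ d ∧ q.1.1 + 2 * q.1.2 + q.2.1.1 + q.2.2.1 = l - d} :=
  ⟨((l - d - (2 * γσ.1.k + (m - γσ.1.k - Multiset.card γσ.1.gp.parts)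
        + (n - d - γσ.1.k - Multiset.card γσ.1.gm.parts)), γσ.1.k),
    ⟨m - γσ.1.k - Multiset.card γσ.1.gp.parts,
      ⟨remCol γσ.1.gp.parts, fun hx => remCol_pos _ _ hx,
        by rw [sum_remCol _ (fun x hx => γσ.1.gp.parts_pos hx), γσ.1.gp.parts_sum]⟩⟩,
    ⟨n - d - γσ.1.k - Multiset.card γσ.1.gm.parts,
      ⟨remCol γσ.1.gm.parts, fun hx => remCol_pos _ _ hx,
        by rw [sum_remCol _ (fun x hx => γσ.1.gm.parts_pos hx), γσ.1.gm.parts_sum]⟩⟩),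
   by
    obtain ⟨γ, hht⟩ := γσ
    have hk := γ.k_le
    have hk1 : γ.k ≤ m := le_trans hk (min_le_left _ _)
    have hk2 : γ.k ≤ n - d := le_trans hk (min_le_right _ _)
    have hc1 := card_le_sum' γ.gp.parts (fun x hx => γ.gp.parts_pos hx)
    rw [γ.gp.parts_sum] at hc1
    have hc2 := card_le_sum' γ.gm.parts (fun x hx => γ.gm.parts_pos hx)
    rw [γ.gm.parts_sum] at hc2
    simp only [BRT.ht] at hht
    dsimp only
    omega⟩

/-- Backward map: from a quadruple to a triple in the height window. -/
def gBA (hl : 2 ≤ l) (hm : 2 * l - 3 ≤ m) (hn : 2 * l - 3 ≤ n) (hd1 : 1 ≤ d) (hd2 : d ≤ l - 1)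
    (qσ : {q : Tq // 1 ≤ q.1.1 ∧ q.1.1 ≤ d ∧ q.1.1 + 2 * q.1.2 + q.2.1.1 + q.2.2.1 = l - d}) :
    {γ : BRT m (n - d) // m + n - l < γ.ht ∧ γ.ht ≤ (m + n - l) + d} :=
  ⟨⟨qσ.1.1.2,
    by
      have hq := qσ.2
      have hca := card_le_sum' qσ.1.2.1.2.parts (fun x hx => qσ.1.2.1.2.parts_pos hx)
      rw [qσ.1.2.1.2.parts_sum] at hca
      omega,
    ⟨addCol qσ.1.2.1.2.parts (m - qσ.1.1.2 - qσ.1.2.1.1 - Multiset.card qσ.1.2.1.2.parts),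
      fun hx => addCol_pos _ _ _ hx,
      by
        have hq := qσ.2
        have hca := card_le_sum' qσ.1.2.1.2.parts (fun x hx => qσ.1.2.1.2.parts_pos hx)
        rw [qσ.1.2.1.2.parts_sum] at hca
        rw [sum_addCol, qσ.1.2.1.2.parts_sum]
        omega⟩,
    ⟨addCol qσ.1.2.2.2.parts (n - d - qσ.1.1.2 - qσ.1.2.2.1 - Multiset.card qσ.1.2.2.2.parts),
      fun hx => addCol_pos _ _ _ hx,
      by
        have hq := qσ.2
        have hcb := card_le_sum' qσ.1.2.2.2.parts (fun x hx => qσ.1.2.2.2.parts_pos hx)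
        rw [qσ.1.2.2.2.parts_sum] at hcb
        rw [sum_addCol, qσ.1.2.2.2.parts_sum]
        omega⟩⟩,
   by
    have hq := qσ.2
    have hca := card_le_sum' qσ.1.2.1.2.parts (fun x hx => qσ.1.2.1.2.parts_pos hx)
    rw [qσ.1.2.1.2.parts_sum] at hca
    have hcb := card_le_sum' qσ.1.2.2.2.parts (fun x hx => qσ.1.2.2.2.parts_pos hx)
    rw [qσ.1.2.2.2.parts_sum] at hcb
    simp only [BRT.ht]
    rw [card_addCol, card_addCol]
    omega⟩

end Main

lemma left_inv_AB (l m n d : ℕ) (hl : 2 ≤ l) (hm : 2 * l - 3 ≤ m) (hn : 2 * l - 3 ≤ n)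
    (hd1 : 1 ≤ d) (hd2 : d ≤ l - 1)
    (γσ : {γ : BRT m (n - d) // m + n - l < γ.ht ∧ γ.ht ≤ (m + n - l) + d}) :
    gBA l m n d hl hm hn hd1 hd2 (fAB l m n d hl hm hn hd1 hd2 γσ) = γσ := by
  obtain ⟨γ, hht⟩ := γσ
  apply Subtype.ext
  apply brt_ext
  · rfl
  · show addCol (remCol γ.gp.parts)
        (m - γ.k - (m - γ.k - Multiset.card γ.gp.parts) - Multiset.card (remCol γ.gp.parts))
        = γ.gp.parts
    have hc1 := card_le_sum' γ.gp.parts (fun x hx => γ.gp.parts_pos hx)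
    rw [γ.gp.parts_sum] at hc1
    have hj : m - γ.k - (m - γ.k - Multiset.card γ.gp.parts) - Multiset.card (remCol γ.gp.parts)
        = Multiset.card γ.gp.parts - Multiset.card (remCol γ.gp.parts) := by omega
    rw [hj]
    exact addCol_remCol _ (fun x hx => γ.gp.parts_pos hx)
  · show addCol (remCol γ.gm.parts)
        (n - d - γ.k - (n - d - γ.k - Multiset.card γ.gm.parts) - Multiset.card (remCol γ.gm.parts))
        = γ.gm.parts
    have hc2 := card_le_sum' γ.gm.parts (fun x hx => γ.gm.parts_pos hx)
    rw [γ.gm.parts_sum] at hc2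
    have hj : n - d - γ.k - (n - d - γ.k - Multiset.card γ.gm.parts)
          - Multiset.card (remCol γ.gm.parts)
        = Multiset.card γ.gm.parts - Multiset.card (remCol γ.gm.parts) := by omega
    rw [hj]
    exact addCol_remCol _ (fun x hx => γ.gm.parts_pos hx)

lemma right_inv_AB (l m n d : ℕ) (hl : 2 ≤ l) (hm : 2 * l - 3 ≤ m) (hn : 2 * l - 3 ≤ n)
    (hd1 : 1 ≤ d) (hd2 : d ≤ l - 1)
    (qσ : {q : Tq // 1 ≤ q.1.1 ∧ q.1.1 ≤ d ∧ q.1.1 + 2 * q.1.2 + q.2.1.1 + q.2.2.1 = l - d}) :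
    fAB l m n d hl hm hn hd1 hd2 (gBA l m n d hl hm hn hd1 hd2 qσ) = qσ := by
  obtain ⟨⟨⟨Δ, k⟩, ⟨a, lam1⟩, ⟨b, lam2⟩⟩, hq⟩ := qσ
  have hq1 : 1 ≤ Δ := hq.1
  have hq2 : Δ ≤ d := hq.2.1
  have hq3 : Δ + 2 * k + a + b = l - d := hq.2.2
  apply Subtype.ext
  have hca := card_le_sum' lam1.parts (fun x hx => lam1.parts_pos hx)
  rw [lam1.parts_sum] at hca
  have hcb := card_le_sum' lam2.parts (fun x hx => lam2.parts_pos hx)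
  rw [lam2.parts_sum] at hcb
  have e1 : m - k - Multiset.card (addCol lam1.parts (m - k - a - Multiset.card lam1.parts)) = a := by
    rw [card_addCol]; omega
  have e2 : n - d - k
      - Multiset.card (addCol lam2.parts (n - d - k - b - Multiset.card lam2.parts)) = b := by
    rw [card_addCol]; omega
  refine Prod.ext ?_ (Prod.ext ?_ ?_)
  · refine Prod.ext ?_ rfl
    show l - d - (2 * k
        + (m - k - Multiset.card (addCol lam1.parts (m - k - a - Multiset.card lam1.parts)))
        + (n - d - k - Multiset.card (addCol lam2.parts (n - d - k - b - Multiset.card lam2.parts))))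
        = Δ
    rw [e1, e2]
    omega
  · exact sigma_part_eq _ _ e1 (remCol_addCol _ _ (fun x hx => lam1.parts_pos hx))
  · exact sigma_part_eq _ _ e2 (remCol_addCol _ _ (fun x hx => lam2.parts_pos hx))

lemma master (l m n d : ℕ) (hl : 2 ≤ l) (hm : 2 * l - 3 ≤ m) (hn : 2 * l - 3 ≤ n)
    (hd1 : 1 ≤ d) (hd2 : d ≤ l - 1) :
    Nat.card {γ : BRT m (n - d) // m + n - l < γ.ht ∧ γ.ht ≤ (m + n - l) + d}
      + Zuniv (l - 2 * d) = Zuniv (l - d) := by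
  classical
  have eAB : {γ : BRT m (n - d) // m + n - l < γ.ht ∧ γ.ht ≤ (m + n - l) + d}
      ≃ {q : Tq // 1 ≤ q.1.1 ∧ q.1.1 ≤ d ∧ q.1.1 + 2 * q.1.2 + q.2.1.1 + q.2.2.1 = l - d} :=
    ⟨fAB l m n d hl hm hn hd1 hd2, gBA l m n d hl hm hn hd1 hd2,
      left_inv_AB l m n d hl hm hn hd1 hd2, right_inv_AB l m n d hl hm hn hd1 hd2⟩
  have eC : {q : Tq // d + 1 ≤ q.1.1 ∧ q.1.1 + 2 * q.1.2 + q.2.1.1 + q.2.2.1 = l - d}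
      ≃ {q : Tq // 1 ≤ q.1.1 ∧ q.1.1 + 2 * q.1.2 + q.2.1.1 + q.2.2.1 = l - 2 * d} :=
    { toFun := fun q => ⟨((q.1.1.1 - d, q.1.1.2), q.1.2), by
        have hq1 : d + 1 ≤ q.1.1.1 := q.2.1
        have hq2 : q.1.1.1 + 2 * q.1.1.2 + q.1.2.1.1 + q.1.2.2.1 = l - d := q.2.2
        dsimp only
        omega⟩
      invFun := fun q => ⟨((q.1.1.1 + d, q.1.1.2), q.1.2), by
        have hq1 : 1 ≤ q.1.1.1 := q.2.1
        have hq2 : q.1.1.1 + 2 * q.1.1.2 + q.1.2.1.1 + q.1.2.2.1 = l - 2 * d := q.2.2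
        dsimp only
        omega⟩
      left_inv := by
        rintro ⟨⟨⟨Δ, k⟩, σ⟩, hq⟩
        have hq1 : d + 1 ≤ Δ := hq.1
        apply Subtype.ext
        dsimp only
        have h : Δ - d + d = Δ := by omega
        rw [h]
      right_inv := by
        rintro ⟨⟨⟨Δ, k⟩, σ⟩, hq⟩
        apply Subtype.ext
        dsimp only
        have h : Δ + d - d = Δ := by omega
        rw [h] }
  have e2 : {q : {q : Tq // 1 ≤ q.1.1 ∧ q.1.1 + 2 * q.1.2 + q.2.1.1 + q.2.2.1 = l - d} //
        q.1.1.1 ≤ d}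
      ≃ {q : Tq // 1 ≤ q.1.1 ∧ q.1.1 ≤ d ∧ q.1.1 + 2 * q.1.2 + q.2.1.1 + q.2.2.1 = l - d} :=
    (Equiv.subtypeSubtypeEquivSubtypeInter
        (fun q : Tq => 1 ≤ q.1.1 ∧ q.1.1 + 2 * q.1.2 + q.2.1.1 + q.2.2.1 = l - d)
        (fun q : Tq => q.1.1 ≤ d)).trans
      (Equiv.subtypeEquivRight (fun q => by constructor <;> intro h <;> omega))
  have e3 : {q : {q : Tq // 1 ≤ q.1.1 ∧ q.1.1 + 2 * q.1.2 + q.2.1.1 + q.2.2.1 = l - d} //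
        ¬ q.1.1.1 ≤ d}
      ≃ {q : Tq // d + 1 ≤ q.1.1 ∧ q.1.1 + 2 * q.1.2 + q.2.1.1 + q.2.2.1 = l - d} :=
    (Equiv.subtypeSubtypeEquivSubtypeInter
        (fun q : Tq => 1 ≤ q.1.1 ∧ q.1.1 + 2 * q.1.2 + q.2.1.1 + q.2.2.1 = l - d)
        (fun q : Tq => ¬ q.1.1 ≤ d)).trans
      (Equiv.subtypeEquivRight (fun q => by constructor <;> intro h <;> omega))
  have eTot : {q : Tq // 1 ≤ q.1.1 ∧ q.1.1 + 2 * q.1.2 + q.2.1.1 + q.2.2.1 = l - d}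
      ≃ {γ : BRT m (n - d) // m + n - l < γ.ht ∧ γ.ht ≤ (m + n - l) + d}
        ⊕ {q : Tq // 1 ≤ q.1.1 ∧ q.1.1 + 2 * q.1.2 + q.2.1.1 + q.2.2.1 = l - 2 * d} :=
    (Equiv.sumCompl (fun q => q.1.1.1 ≤ d)).symm.trans
      (Equiv.sumCongr (e2.trans eAB.symm) (e3.trans eC))
  have finA : Finite {γ : BRT m (n - d) // m + n - l < γ.ht ∧ γ.ht ≤ (m + n - l) + d} :=
    Subtype.finite
  have finQ2 : Finite {q : Tq // 1 ≤ q.1.1 ∧ q.1.1 + 2 * q.1.2 + q.2.1.1 + q.2.2.1 = l - 2 * d} :=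
    finite_aux (l - 2 * d) _ (fun q hq => hq.2)
  have hcard := Nat.card_congr eTot
  rw [Nat.card_sum] at hcard
  show Nat.card _ + Zuniv (l - 2 * d) = Zuniv (l - d)
  unfold Zuniv
  exact hcard.symm


/-- For `l ≥ 2`, `m, n ≥ 2l - 3`, `N = m + n - l` and `1 ≤ d ≤ l - 1`, let `R(l,d)` be
the number of Brauer representation triples `γ` for the pair `(m, n - d)` with
`N < ht(γ) ≤ N + d`.  Then `R(l,d) = Z_univ(l-d) - Z_univ(l-2d)` for `1 ≤ d ≤ ⌊l/2⌋`,
and `R(l,d) = Z_univ(l-d)` for `⌈l/2⌉ ≤ d ≤ l - 1`. -/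
theorem stmt7 (l m n d : ℕ) (hl : 2 ≤ l) (hm : 2 * l - 3 ≤ m) (hn : 2 * l - 3 ≤ n)
    (hd1 : 1 ≤ d) (hd2 : d ≤ l - 1) :
    (d ≤ l / 2 →
      Nat.card {γ : BRT m (n - d) // m + n - l < γ.ht ∧ γ.ht ≤ (m + n - l) + d}
        = Zuniv (l - d) - Zuniv (l - 2 * d)) ∧
    ((l + 1) / 2 ≤ d →
      Nat.card {γ : BRT m (n - d) // m + n - l < γ.ht ∧ γ.ht ≤ (m + n - l) + d}
        = Zuniv (l - d)) := by
  have hmas := master l m n d hl hm hn hd1 hd2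
  constructor
  · intro _
    omega
  · intro hd
    have h0 : l - 2 * d = 0 := by omega
    rw [h0, Zuniv_zero] at hmas
    omega
end

section
/- Let l ≥ 2, let m, n ≥ 2l − 3, set N = m + n − l, and let 0 ≤ d ≤ l − 1. Then Σ_{d'=d+1}^{l−1} #{Brauer representation triples for the pair (m, n−d') with ht = N + 1} = Z_univ(l − 1 − d). In particular, taking d = 0, the total number of N-excluded triples of excess exactly 1 over all depths 1 ≤ d' ≤ l−1 equals Z_univ(l−1). -/
open Multiset

def padM (μ : Multiset ℕ) (h : ℕ) : Multiset ℕ :=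
  μ.map (· + 1) + Multiset.replicate (h - Multiset.card μ) 1

def stripM (ν : Multiset ℕ) : Multiset ℕ := (ν.map (· - 1)).filter (· ≠ 0)

lemma pad_pos (μ : Multiset ℕ) (h : ℕ) : ∀ x ∈ padM μ h, 0 < x := by
  intro x hx
  rcases mem_add.mp hx with h1 | h1
  · obtain ⟨a, _, rfl⟩ := mem_map.mp h1; omega
  · rw [eq_of_mem_replicate h1]; norm_num

lemma pad_card {μ : Multiset ℕ} {h : ℕ} (hc : Multiset.card μ ≤ h) :
    Multiset.card (padM μ h) = h := by
  simp [padM]; omega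

lemma pad_sum {μ : Multiset ℕ} {h : ℕ} (hc : Multiset.card μ ≤ h) :
    (padM μ h).sum = μ.sum + h := by
  simp only [padM, sum_add, sum_replicate, smul_eq_mul, mul_one]
  have : (μ.map (· + 1)).sum = μ.sum + Multiset.card μ := by
    induction μ using Multiset.induction with
    | empty => simp
    | cons a s ih => simp [ih]; ring
  omega

lemma strip_pos (ν : Multiset ℕ) : ∀ x ∈ stripM ν, 0 < x := by
  intro x hx
  have := (mem_filter.mp hx).2
  omega

lemma strip_pad {μ : Multiset ℕ} (hpos : ∀ x ∈ μ, 0 < x) (h : ℕ) :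
    stripM (padM μ h) = μ := by
  simp only [stripM, padM, map_add, filter_add, map_map, Function.comp]
  have h1 : (μ.map fun x => x + 1 - 1) = μ.map id := by
    apply map_congr rfl; intro x _; simp
  rw [h1, map_id]
  have h2 : filter (· ≠ 0) μ = μ := by
    apply filter_eq_self.mpr; intro x hx; exact (hpos x hx).ne'
  have h3 : (Multiset.map (fun x => x - 1) (replicate (h - Multiset.card μ) 1)) = replicate (h - Multiset.card μ) 0 := by
    rw [map_replicate]
  rw [h2, h3]
  rw [filter_eq_nil.mpr (by intro a ha; rw [eq_of_mem_replicate ha]; simp)]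
  simp

lemma pad_strip {ν : Multiset ℕ} (hpos : ∀ x ∈ ν, 0 < x) :
    padM (stripM ν) (Multiset.card ν) = ν := by
  simp only [padM, stripM]
  have h1 : filter (· ≠ 0) (ν.map (· - 1)) = (ν.filter (· ≠ 1)).map (· - 1) := by
    rw [filter_map]
    apply congrArg
    apply filter_congr
    intro x hx
    have := hpos x hx
    simp only [Function.comp_apply, ne_eq]
    omega
  rw [h1, map_map]
  have h2 : ((ν.filter (· ≠ 1)).map ((· + 1) ∘ (· - 1))) = ν.filter (· ≠ 1) := by
    have : ∀ x ∈ ν.filter (· ≠ 1), ((· + 1) ∘ (· - 1)) x = id x := by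
      intro x hx
      obtain ⟨hx1, hx2⟩ := mem_filter.mp hx
      have := hpos x hx1
      simp at hx2 ⊢
      omega
    rw [map_congr rfl this, map_id]
  rw [h2]
  have h3 : Multiset.card ((ν.filter (· ≠ 1)).map (· - 1)) = Multiset.card (ν.filter (· ≠ 1)) := by
    rw [card_map]
  rw [h3]
  have h4 : Multiset.card ν - Multiset.card (filter (· ≠ 1) ν) = Multiset.card (filter (· = 1) ν) := by
    have := filter_add_not (· ≠ 1) ν
    have hc := congrArg Multiset.card this
    rw [card_add] at hc
    have heq : filter (fun a => ¬ a ≠ 1) ν = filter (· = 1) ν := by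
      apply filter_congr; intro x _; constructor <;> intro h <;> simp_all
    rw [heq] at hc
    omega
  rw [h4]
  have h5 : replicate (Multiset.card (filter (· = 1) ν)) 1 = filter (· = 1) ν := by
    symm; apply eq_replicate_card.mpr; intro b hb; exact (mem_filter.mp hb).2
  rw [h5]
  have := filter_add_not (· ≠ 1) ν
  have h6 : filter (fun a => ¬ a ≠ 1) ν = filter (· = 1) ν := by
    apply filter_congr; intro x _; constructor <;> intro h <;> simp_all
  rw [h6] at this
  exact this

lemma card_le_sum'_s9 {ν : Multiset ℕ} (hpos : ∀ x ∈ ν, 0 < x) :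
    Multiset.card ν ≤ ν.sum := by
  induction ν using Multiset.induction with
  | empty => simp
  | cons a s ih =>
    simp only [card_cons, sum_cons]
    have ha := hpos a (mem_cons_self a s)
    have := ih (fun x hx => hpos x (mem_cons_of_mem hx))
    omega

lemma strip_card_le (ν : Multiset ℕ) : Multiset.card (stripM ν) ≤ Multiset.card ν := by
  simp only [stripM]
  calc Multiset.card (filter (· ≠ 0) (ν.map (· - 1))) ≤ Multiset.card (ν.map (· - 1)) := card_le_card (filter_le _ _)
    _ = Multiset.card ν := card_map _ _

lemma strip_sum {ν : Multiset ℕ} (hpos : ∀ x ∈ ν, 0 < x) :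
    (stripM ν).sum + Multiset.card ν = ν.sum := by
  conv_rhs => rw [← pad_strip hpos]
  rw [pad_sum (le_trans (strip_card_le ν) le_rfl)]

def Wset (t : ℕ) : Type :=
  {q : ℕ × (Σ a : ℕ, Nat.Partition a) × (Σ a : ℕ, Nat.Partition a) //
    2 * q.1 + q.2.1.1 + q.2.2.1 = t}

lemma sigPart_ext {x y : Σ a : ℕ, Nat.Partition a} (h : x.2.parts = y.2.parts) : x = y := by
  obtain ⟨a, pa⟩ := x
  obtain ⟨b, pb⟩ := y
  have hab : a = b := by rw [← pa.parts_sum, ← pb.parts_sum, h]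
  subst hab
  simp only [Sigma.mk.inj_iff, heq_eq_eq]
  exact ⟨trivial, Nat.Partition.ext h⟩

instance wsetFinite (t : ℕ) : Finite (Wset t) := by
  apply Finite.of_injective
    (fun q : Wset t =>
      ((⟨q.1.1, by have := q.2; omega⟩ : Fin (t + 1)),
       (⟨⟨q.1.2.1.1, by have := q.2; omega⟩, q.1.2.1.2⟩ : Σ a : Fin (t + 1), Nat.Partition a),
       (⟨⟨q.1.2.2.1, by have := q.2; omega⟩, q.1.2.2.2⟩ : Σ a : Fin (t + 1), Nat.Partition a)))
  intro x y h
  have hk : x.1.1 = y.1.1 := congrArg (fun z => z.1.val) h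
  have h1 : x.1.2.1 = y.1.2.1 :=
    congrArg (fun z : Fin (t+1) × (Σ a : Fin (t+1), Nat.Partition a) × (Σ a : Fin (t+1), Nat.Partition a) =>
      (⟨z.2.1.1.val, z.2.1.2⟩ : Σ a : ℕ, Nat.Partition a)) h
  have h2 : x.1.2.2 = y.1.2.2 :=
    congrArg (fun z : Fin (t+1) × (Σ a : Fin (t+1), Nat.Partition a) × (Σ a : Fin (t+1), Nat.Partition a) =>
      (⟨z.2.2.1.val, z.2.2.2⟩ : Σ a : ℕ, Nat.Partition a)) h
  exact Subtype.ext (Prod.ext hk (Prod.ext h1 h2))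

theorem lemA (m' n' t : ℕ) (h1 : 2 * t ≤ m') (h2 : 2 * t ≤ n') :
    Nat.card {γ : BRT m' n' // γ.ht + t = m' + n'} = Nat.card (Wset t) := by
  apply Nat.card_congr
  refine
    { toFun := fun γ =>
        ⟨⟨γ.1.k,
          ⟨(stripM γ.1.gp.parts).sum, ⟨stripM γ.1.gp.parts, fun {i} hi => strip_pos _ i hi, rfl⟩⟩,
          ⟨(stripM γ.1.gm.parts).sum, ⟨stripM γ.1.gm.parts, fun {i} hi => strip_pos _ i hi, rfl⟩⟩⟩,
         by
          have e1 := strip_sum (fun x hx => γ.1.gp.parts_pos hx)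
          have e2 := strip_sum (fun x hx => γ.1.gm.parts_pos hx)
          have e3 := γ.1.gp.parts_sum
          have e4 := γ.1.gm.parts_sum
          have e5 := le_min_iff.mp γ.1.k_le
          have e6 := γ.2
          simp only [BRT.ht] at e6
          dsimp only
          omega⟩,
      invFun := fun q =>
        ⟨{ k := q.1.1,
           k_le := le_min (by have := q.2; omega) (by have := q.2; omega),
           gp := ⟨padM q.1.2.1.2.parts (m' - q.1.1 - q.1.2.1.1),
             fun {i} hi => pad_pos _ _ i hi,
             by
              have hcle := card_le_sum'_s9 (fun x hx => q.1.2.1.2.parts_pos hx)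
              have hsum := q.1.2.1.2.parts_sum
              have hq := q.2
              rw [pad_sum (by omega), hsum]
              omega⟩,
           gm := ⟨padM q.1.2.2.2.parts (n' - q.1.1 - q.1.2.2.1),
             fun {i} hi => pad_pos _ _ i hi,
             by
              have hcle := card_le_sum'_s9 (fun x hx => q.1.2.2.2.parts_pos hx)
              have hsum := q.1.2.2.2.parts_sum
              have hq := q.2
              rw [pad_sum (by omega), hsum]
              omega⟩ },
         by
          have hc1 := card_le_sum'_s9 (fun x hx => q.1.2.1.2.parts_pos hx)
          have hs1 := q.1.2.1.2.parts_sum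
          have hc2 := card_le_sum'_s9 (fun x hx => q.1.2.2.2.parts_pos hx)
          have hs2 := q.1.2.2.2.parts_sum
          have hq := q.2
          simp only [BRT.ht]
          rw [pad_card (by omega), pad_card (by omega)]
          omega⟩,
      left_inv := ?_,
      right_inv := ?_ }
  · rintro ⟨⟨k, hk, gp, gm⟩, hγ⟩
    apply Subtype.ext
    simp only [BRT.mk.injEq, heq_eq_eq, true_and]
    constructor
    · apply Nat.Partition.ext
      show padM (stripM gp.parts) (m' - k - (stripM gp.parts).sum) = gp.parts
      have e1 := strip_sum (fun x hx => gp.parts_pos hx)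
      have e3 := gp.parts_sum
      have e5 : Multiset.card gp.parts ≤ m' - k := by
        have := card_le_sum'_s9 (fun x hx => gp.parts_pos hx); omega
      rw [show m' - k - (stripM gp.parts).sum = Multiset.card gp.parts by omega]
      exact pad_strip (fun x hx => gp.parts_pos hx)
    · apply Nat.Partition.ext
      show padM (stripM gm.parts) (n' - k - (stripM gm.parts).sum) = gm.parts
      have e1 := strip_sum (fun x hx => gm.parts_pos hx)
      have e3 := gm.parts_sum
      have e5 : Multiset.card gm.parts ≤ n' - k := by
        have := card_le_sum'_s9 (fun x hx => gm.parts_pos hx); omega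
      rw [show n' - k - (stripM gm.parts).sum = Multiset.card gm.parts by omega]
      exact pad_strip (fun x hx => gm.parts_pos hx)
  · rintro ⟨⟨k, ⟨a₁, lam₁⟩, ⟨a₂, lam₂⟩⟩, hq⟩
    apply Subtype.ext
    refine Prod.ext rfl (Prod.ext ?_ ?_)
    · exact sigPart_ext (strip_pad (fun x hx => lam₁.parts_pos hx) _)
    · exact sigPart_ext (strip_pad (fun x hx => lam₂.parts_pos hx) _)

theorem zuniv_eq (s : ℕ) :
    Zuniv s = ∑ Δ ∈ Finset.Icc 1 s, Nat.card (Wset (s - Δ)) := by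
  classical
  have e : {q : (ℕ × ℕ) × (Σ a : ℕ, Nat.Partition a) × (Σ a : ℕ, Nat.Partition a) //
      1 ≤ q.1.1 ∧ q.1.1 + 2 * q.1.2 + q.2.1.1 + q.2.2.1 = s}
      ≃ (Σ Δ : (Finset.Icc 1 s : Finset ℕ), Wset (s - Δ.1)) :=
    { toFun := fun q =>
        ⟨⟨q.1.1.1, Finset.mem_Icc.mpr ⟨q.2.1, by have := q.2.2; omega⟩⟩,
         ⟨⟨q.1.1.2, q.1.2⟩, by have := q.2.2; dsimp only; omega⟩⟩,
      invFun := fun x =>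
        ⟨⟨⟨x.1.1, x.2.1.1⟩, x.2.1.2⟩,
         (Finset.mem_Icc.mp x.1.2).1,
         by have h1 := (Finset.mem_Icc.mp x.1.2).2; have h2 := x.2.2; dsimp only; omega⟩,
      left_inv := fun q => rfl,
      right_inv := fun x => rfl }
  rw [Zuniv, Nat.card_congr e]
  haveI : ∀ Δ : (Finset.Icc 1 s : Finset ℕ), Fintype (Wset (s - Δ.1)) :=
    fun _ => Fintype.ofFinite _
  rw [Nat.card_eq_fintype_card, Fintype.card_sigma,
    ← Finset.sum_coe_sort (Finset.Icc 1 s) (fun Δ => Nat.card (Wset (s - Δ)))]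
  exact Finset.sum_congr rfl (fun Δ _ => (Nat.card_eq_fintype_card).symm)


/-- For `l ≥ 2`, `m, n ≥ 2l - 3`, `N = m + n - l` and `0 ≤ d ≤ l - 1`,
`Σ_{d'=d+1}^{l-1} #{triples for (m, n - d') of height N + 1} = Z_univ(l - 1 - d)`.
In particular (taking `d = 0`) the total number of `N`-excluded triples of excess
exactly `1` over all depths `1 ≤ d' ≤ l - 1` equals `Z_univ(l-1)`. -/
theorem stmt9 (l m n d : ℕ) (hl : 2 ≤ l) (hm : 2 * l - 3 ≤ m) (hn : 2 * l - 3 ≤ n)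
    (hd : d ≤ l - 1) :
    (∑ d' ∈ Finset.Icc (d + 1) (l - 1),
        Nat.card {γ : BRT m (n - d') // γ.ht = (m + n - l) + 1})
      = Zuniv (l - 1 - d) := by
  have key : ∀ d' ∈ Finset.Icc (d + 1) (l - 1),
      Nat.card {γ : BRT m (n - d') // γ.ht = (m + n - l) + 1}
        = Nat.card (Wset (l - 1 - d')) := by
    intro d' hd'
    rw [Finset.mem_Icc] at hd'
    have e1 : Nat.card {γ : BRT m (n - d') // γ.ht = (m + n - l) + 1}
        = Nat.card {γ : BRT m (n - d') // γ.ht + (l - 1 - d') = m + (n - d')} := by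
      apply Nat.card_congr
      apply Equiv.subtypeEquivRight
      intro γ
      omega
    rw [e1]
    exact lemA m (n - d') (l - 1 - d') (by omega) (by omega)
  rw [Finset.sum_congr rfl key, zuniv_eq]
  apply Finset.sum_nbij' (i := fun d' => d' - d) (j := fun Δ => Δ + d)
  · intro a ha; simp only [Finset.mem_Icc] at ha ⊢; omega
  · intro a ha; simp only [Finset.mem_Icc] at ha ⊢; omega
  · intro a ha; simp only [Finset.mem_Icc] at ha; omega
  · intro a ha; simp only [Finset.mem_Icc] at ha; omega
  · intro a ha
    simp only [Finset.mem_Icc] at ha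
    have h9 : l - 1 - d - (a - d) = l - 1 - a := by omega
    rw [h9]
end

section
/- (Surjectivity of the first-ancestor map.) Let l ≥ 2, let m, n ≥ 2l − 3, set N = m + n − l, and let 1 ≤ d ≤ l − 1. Let γ = (k, γ₊, γ₋) be a Brauer representation triple for the pair (m, n−d) with ht(γ) = N + 1. Then γ₊ has at least d parts equal to 1, and the triple g = (k + d, g₊, γ₋), where g₊ is γ₊ with d parts equal to 1 removed, is a Brauer representation triple for the pair (m,n) with ht(g) = N + 1 − d ≤ N, and γ is an ancestor of g at depth d. -/
-- auxiliary material
lemma two_card_le (s : Multiset ℕ) (hs : ∀ x ∈ s, 0 < x) :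
    2 * Multiset.card s ≤ s.sum + s.count 1 := by
  induction s using Multiset.induction with
  | empty => simp
  | cons a s ih =>
    have ha : 0 < a := hs a (Multiset.mem_cons_self a s)
    have ih' := ih (fun x hx => hs x (Multiset.mem_cons_of_mem hx))
    rcases eq_or_ne (1:ℕ) a with h | h
    · simp [Multiset.count_cons, h.symm, Multiset.sum_cons]
      omega
    · simp [Multiset.count_cons, h, Multiset.sum_cons]
      have : 2 ≤ a := by omega
      omega

def trip (m n k₀ : ℕ) (a b : Multiset ℕ) (i : ℕ)
    (hm : k₀ ≤ m) (hn : k₀ ≤ n) (hi : i ≤ k₀)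
    (ha : ∀ x ∈ a, 0 < x) (hb : ∀ x ∈ b, 0 < x)
    (hsa : a.sum + k₀ = m) (hsb : b.sum + k₀ = n) : BRT m (n - i) where
  k := k₀ - i
  k_le := by omega
  gp := ⟨Multiset.replicate i 1 + a, by
      intro x hx
      rcases Multiset.mem_add.1 hx with h | h
      · rw [Multiset.eq_of_mem_replicate h]; norm_num
      · exact ha x h, by
      simp [Multiset.sum_replicate]; omega⟩
  gm := ⟨b, fun hx => hb _ hx, by omega⟩

lemma BRT.ext' {m n : ℕ} {γ γ' : BRT m n} (hk : γ.k = γ'.k)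
    (hp : γ.gp.parts = γ'.gp.parts) (hq : γ.gm.parts = γ'.gm.parts) : γ = γ' := by
  obtain ⟨k, hk1, p1, m1⟩ := γ
  obtain ⟨k', hk2, p2, m2⟩ := γ'
  simp only at hk
  subst hk
  simp only at hp hq
  congr 1
  · exact Nat.Partition.ext hp
  · exact Nat.Partition.ext hq

lemma trip_parent (m n k₀ : ℕ) (a b : Multiset ℕ) (j : ℕ)
    (hm : k₀ ≤ m) (hn : k₀ ≤ n) (hj : j + 1 ≤ k₀)
    (ha : ∀ x ∈ a, 0 < x) (hb : ∀ x ∈ b, 0 < x)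
    (hsa : a.sum + k₀ = m) (hsb : b.sum + k₀ = n) :
    IsParent (trip m n k₀ a b j hm hn (by omega) ha hb hsa hsb)
             (trip m n k₀ a b (j+1) hm hn hj ha hb hsa hsb) := by
  right
  refine ⟨by simp [trip]; omega, rfl, Or.inl ?_⟩
  show Multiset.replicate (j+1) 1 + a = 1 ::ₘ (Multiset.replicate j 1 + a)
  rw [Multiset.replicate_succ, Multiset.cons_add]

lemma ancestor_chain (m n k₀ : ℕ) (a b : Multiset ℕ)
    (hm : k₀ ≤ m) (hn : k₀ ≤ n)
    (ha : ∀ x ∈ a, 0 < x) (hb : ∀ x ∈ b, 0 < x)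
    (hsa : a.sum + k₀ = m) (hsb : b.sum + k₀ = n) :
    ∀ i, 1 ≤ i → ∀ hi : i ≤ k₀,
      IsAncestor m n 0 i (trip m n k₀ a b 0 hm hn (Nat.zero_le _) ha hb hsa hsb)
        (trip m n k₀ a b i hm hn hi ha hb hsa hsb) := by
  intro i
  induction i with
  | zero => omega
  | succ j ih =>
    intro _ hi
    rcases Nat.eq_zero_or_pos j with rfl | hj
    · exact IsAncestor.step _ _ (trip_parent m n k₀ a b 0 hm hn hi ha hb hsa hsb)
    · exact IsAncestor.tail _ (ih hj (by omega))
        (trip_parent m n k₀ a b j hm hn hi ha hb hsa hsb)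

/-- Surjectivity of the first-ancestor map: for `l ≥ 2`, `m, n ≥ 2l - 3`,
`N = m + n - l`, `1 ≤ d ≤ l - 1`, if `γ = (k, γ₊, γ₋)` is a Brauer representation triple
for the pair `(m, n - d)` with `ht(γ) = N + 1`, then `γ₊` has at least `d` parts equal
to `1`, and the triple `g = (k + d, γ₊ minus d parts equal to 1, γ₋)` is a triple for the
pair `(m, n)` with `ht(g) = N + 1 - d ≤ N` of which `γ` is an ancestor at depth `d`. -/
theorem stmt12 (m n l d : ℕ) (hl : 2 ≤ l) (hm : 2 * l - 3 ≤ m) (hn : 2 * l - 3 ≤ n)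
    (hd1 : 1 ≤ d) (hd2 : d ≤ l - 1)
    (γ : BRT m (n - d)) (hht : γ.ht = (m + n - l) + 1) :
    d ≤ Multiset.count 1 γ.gp.parts ∧
    ∃ g : BRT m (n - 0),
      g.k = γ.k + d ∧
      Multiset.replicate d 1 + g.gp.parts = γ.gp.parts ∧
      g.gm.parts = γ.gm.parts ∧
      g.ht = (m + n - l) + 1 - d ∧
      g.ht ≤ m + n - l ∧
      IsAncestor m n 0 d g γ := by
  obtain ⟨k, hk_le, gp, gm⟩ := γ
  simp only [BRT.ht] at hht
  have hkm : k ≤ m := le_trans hk_le (min_le_left _ _)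
  have hknd : k ≤ n - d := le_trans hk_le (min_le_right _ _)
  have hdn : d ≤ n := by omega
  have hsp : gp.parts.sum = m - k := gp.parts_sum
  have hsm : gm.parts.sum = n - d - k := gm.parts_sum
  have hcount : 2 * Multiset.card gp.parts ≤ gp.parts.sum + gp.parts.count 1 :=
    two_card_le _ (fun x hx => gp.parts_pos hx)
  have hclecnt : gp.parts.count 1 ≤ Multiset.card gp.parts := Multiset.count_le_card _ _
  have hcm : 2 * Multiset.card gm.parts ≤ gm.parts.sum + gm.parts.count 1 :=
    two_card_le _ (fun x hx => gm.parts_pos hx)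
  have hcm' : gm.parts.count 1 ≤ Multiset.card gm.parts := Multiset.count_le_card _ _
  have h1 : d ≤ gp.parts.count 1 := by omega
  have hle : Multiset.replicate d 1 ≤ gp.parts := by
    rw [Multiset.le_iff_count]
    intro x
    rw [Multiset.count_replicate]
    split
    · next h => subst h; exact h1
    · exact Nat.zero_le _
  set A : Multiset ℕ := gp.parts - Multiset.replicate d 1 with hA
  have heq : Multiset.replicate d 1 + A = gp.parts := add_tsub_cancel_of_le hle
  have hApos : ∀ x ∈ A, 0 < x := fun x hx =>
    gp.parts_pos (Multiset.mem_of_le (tsub_le_self) hx)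
  have hAsum : A.sum + d = gp.parts.sum := by
    rw [← heq, Multiset.sum_add, Multiset.sum_replicate]; simp; omega
  have hAcard : Multiset.card A + d = Multiset.card gp.parts := by
    rw [← heq]; simp [add_comm]
  have hm' : k + d ≤ m := by omega
  have hn' : k + d ≤ n := by omega
  have hsa : A.sum + (k + d) = m := by omega
  have hsb : gm.parts.sum + (k + d) = n := by omega
  have hbpos : ∀ x ∈ gm.parts, 0 < x := fun x hx => gm.parts_pos hx
  refine ⟨h1, trip m n (k+d) A gm.parts 0 hm' hn' (Nat.zero_le _) hApos hbpos hsa hsb,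
    ?_, ?_, rfl, ?_, ?_, ?_⟩
  · simp [trip]
  · show Multiset.replicate d 1 + (Multiset.replicate 0 1 + A) = gp.parts
    simpa using heq
  · show Multiset.card (Multiset.replicate 0 1 + A) + Multiset.card gm.parts = _
    rw [Multiset.replicate_zero, zero_add]
    omega
  · show Multiset.card (Multiset.replicate 0 1 + A) + Multiset.card gm.parts ≤ _
    rw [Multiset.replicate_zero, zero_add]
    omega
  · have hch := ancestor_chain m n (k+d) A gm.parts hm' hn' hApos hbpos hsa hsb d hd1
      (by omega)
    have htr : trip m n (k+d) A gm.parts d hm' hn' (by omega) hApos hbpos hsa hsb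
        = ⟨k, hk_le, gp, gm⟩ := by
      apply BRT.ext'
      · show k + d - d = k; omega
      · show Multiset.replicate d 1 + A = gp.parts; exact heq
      · rfl
    rwa [htr] at hch
end
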